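/- arXiv:2502.11257 — 4 statements merged into one kernel-verified Lean document; each statement's English description precedes it below -/
import Mathlib

section
/- (Birman–Schwinger principle, eigenvalue correspondence.) For every λ with λ ∉ σ(A) and every t > 0, the dimension of ker(A − tV − λI) equals the dimension of ker(X(λ) − t^{-1}·I); in particular, λ is an eigenvalue of A − tV if and only if 1/t is an eigenvalue of X(λ), with equal multiplicities. -/
open Filter

noncomputable section

set_option maxHeartbeats 1000000

/-- (Birman–Schwinger principle, eigenvalue correspondence.)
Let `A` be the discrete Schrödinger operator `[Au]_n = −∑_{|m−n|=1} u_m + 2d u_n + f(n) u_n`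
on `ℓ²(ℤ^d)` (with `f` bounded), and let `V : ℤ^d → [0,∞)` be bounded with `V(n) → 0` as
`|n| → ∞`, acting by multiplication (operator `MV`, with square root multiplication operator
`√V = sqrtV`).  For every `λ ∉ σ(A)` and every `t > 0`, the dimension of
`ker (A − tV − λI)` equals the dimension of `ker (X(λ) − t⁻¹ I)` where
`X(λ) = √V (A − λI)⁻¹ √V`; in particular, `λ` is an eigenvalue of `A − tV` if and only if
`1/t` is an eigenvalue of `X(λ)`, with equal multiplicities. -/
theorem birman_schwinger_correspondence (d : ℕ) (hd : 1 ≤ d)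
    (f : (Fin d → ℤ) → ℝ) (hf : ∃ C, ∀ n, |f n| ≤ C)
    (A : lp (fun _ : Fin d → ℤ => ℂ) 2 →L[ℂ] lp (fun _ : Fin d → ℤ => ℂ) 2)
    (hA : ∀ (u : lp (fun _ : Fin d → ℤ => ℂ) 2) (n : Fin d → ℤ),
      A u n = -(∑ i : Fin d, (u (n + Pi.single i 1) + u (n - Pi.single i 1)))
        + (2 * d : ℂ) * u n + (f n : ℂ) * u n)
    (hAsa : IsSelfAdjoint A)
    (V : (Fin d → ℤ) → ℝ) (hV0 : ∀ n, 0 ≤ V n) (hVb : ∃ C, ∀ n, V n ≤ C)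
    (hVdec : Tendsto V cofinite (nhds 0))
    (MV : lp (fun _ : Fin d → ℤ => ℂ) 2 →L[ℂ] lp (fun _ : Fin d → ℤ => ℂ) 2)
    (hMV : ∀ u n, MV u n = (V n : ℂ) * u n)
    (sqrtV : lp (fun _ : Fin d → ℤ => ℂ) 2 →L[ℂ] lp (fun _ : Fin d → ℤ => ℂ) 2)
    (hsqrtV : ∀ u n, sqrtV u n = (Real.sqrt (V n) : ℂ) * u n)
    (lam : ℝ) (hlam : (lam : ℂ) ∉ spectrum ℂ A) (t : ℝ) (ht : 0 < t) :
    Module.finrank ℂ (LinearMap.ker ((A - (t : ℂ) • MV - (lam : ℂ) • (1 : lp (fun _ : Fin d → ℤ => ℂ) 2 →L[ℂ] lp (fun _ : Fin d → ℤ => ℂ) 2)) : lp (fun _ : Fin d → ℤ => ℂ) 2 →ₗ[ℂ] lp (fun _ : Fin d → ℤ => ℂ) 2)) =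
      Module.finrank ℂ (LinearMap.ker
        ((sqrtV ∘L Ring.inverse (A - (lam : ℂ) • (1 : lp (fun _ : Fin d → ℤ => ℂ) 2 →L[ℂ] lp (fun _ : Fin d → ℤ => ℂ) 2)) ∘L sqrtV - ((t⁻¹ : ℝ) : ℂ) • (1 : lp (fun _ : Fin d → ℤ => ℂ) 2 →L[ℂ] lp (fun _ : Fin d → ℤ => ℂ) 2)) : lp (fun _ : Fin d → ℤ => ℂ) 2 →ₗ[ℂ] lp (fun _ : Fin d → ℤ => ℂ) 2)) ∧
    (LinearMap.ker ((A - (t : ℂ) • MV - (lam : ℂ) • (1 : lp (fun _ : Fin d → ℤ => ℂ) 2 →L[ℂ] lp (fun _ : Fin d → ℤ => ℂ) 2)) : lp (fun _ : Fin d → ℤ => ℂ) 2 →ₗ[ℂ] lp (fun _ : Fin d → ℤ => ℂ) 2) ≠ ⊥ ↔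
      LinearMap.ker
        ((sqrtV ∘L Ring.inverse (A - (lam : ℂ) • (1 : lp (fun _ : Fin d → ℤ => ℂ) 2 →L[ℂ] lp (fun _ : Fin d → ℤ => ℂ) 2)) ∘L sqrtV - ((t⁻¹ : ℝ) : ℂ) • (1 : lp (fun _ : Fin d → ℤ => ℂ) 2 →L[ℂ] lp (fun _ : Fin d → ℤ => ℂ) 2)) : lp (fun _ : Fin d → ℤ => ℂ) 2 →ₗ[ℂ] lp (fun _ : Fin d → ℤ => ℂ) 2) ≠ ⊥) := by

  classical
  set E := lp (fun _ : Fin d → ℤ => ℂ) 2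
  set B : E →L[ℂ] E := A - (lam : ℂ) • 1 with hB
  set R : E →L[ℂ] E := Ring.inverse B with hRdef
  have ht0 : (t : ℂ) ≠ 0 := by
    exact_mod_cast Complex.ofReal_ne_zero.mpr (ne_of_gt ht)
  have hunit : IsUnit B := by
    rw [spectrum.notMem_iff] at hlam
    have := hlam.neg
    rw [neg_sub] at this
    simpa [hB, Algebra.algebraMap_eq_smul_one] using this
  have hBR : ∀ x, B (R x) = x := by
    intro x
    have h := Ring.mul_inverse_cancel B hunit
    calc B (R x) = (B * R) x := rfl
    _ = x := by rw [h]; rfl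
  have hRB : ∀ x, R (B x) = x := by
    intro x
    have h := Ring.inverse_mul_cancel B hunit
    calc R (B x) = (R * B) x := rfl
    _ = x := by rw [h]; rfl
  -- MV = sqrtV ∘ sqrtV
  have hMVsq : ∀ u : E, sqrtV (sqrtV u) = MV u := by
    intro u
    apply lp.ext
    funext n
    have : (sqrtV (sqrtV u)) n = (Real.sqrt (V n) : ℂ) * ((Real.sqrt (V n) : ℂ) * u n) := by
      rw [hsqrtV, hsqrtV]
    rw [this, hMV, ← mul_assoc, ← Complex.ofReal_mul, Real.mul_self_sqrt (hV0 n)]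
  set K : E →L[ℂ] E := A - (t : ℂ) • MV - (lam : ℂ) • 1 with hKdef
  set L : E →L[ℂ] E := sqrtV ∘L R ∘L sqrtV - ((t⁻¹ : ℝ) : ℂ) • 1 with hLdef
  have hKapp : ∀ x, K x = B x - (t : ℂ) • MV x := by
    intro x
    have : K = B - (t : ℂ) • MV := by rw [hKdef, hB, sub_right_comm]
    rw [this]; rfl
  have hLapp : ∀ x, L x = sqrtV (R (sqrtV x)) - (t : ℂ)⁻¹ • x := by
    intro x
    rw [hLdef]
    simp [ContinuousLinearMap.sub_apply, ContinuousLinearMap.comp_apply,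
      ContinuousLinearMap.smul_apply, ContinuousLinearMap.one_apply, Complex.ofReal_inv]
  -- forward: kernel of K maps into kernel of L via sqrtV
  have hRMV : ∀ u : E, K u = 0 → R (MV u) = (t : ℂ)⁻¹ • u := by
    intro u hu
    have hBu : B u = (t : ℂ) • MV u := by
      have := hKapp u; rw [hu] at this; exact (sub_eq_zero.mp this.symm)
    have : u = (t : ℂ) • R (MV u) := by
      conv_lhs => rw [← hRB u, hBu, map_smul]
    conv_rhs => rw [this]
    rw [smul_smul, inv_mul_cancel₀ ht0, one_smul]
  have hfwd : ∀ u : E, K u = 0 → L (sqrtV u) = 0 := by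
    intro u hu
    rw [hLapp, hMVsq u, hRMV u hu, map_smul, sub_self]
  have hbwd : ∀ φ : E, L φ = 0 → K ((t : ℂ) • R (sqrtV φ)) = 0 := by
    intro φ hφ
    have hXφ : sqrtV (R (sqrtV φ)) = (t : ℂ)⁻¹ • φ := by
      have := hLapp φ; rw [hφ] at this; exact (sub_eq_zero.mp this.symm)
    rw [hKapp]
    have h1 : B ((t : ℂ) • R (sqrtV φ)) = (t : ℂ) • sqrtV φ := by
      rw [map_smul, hBR]
    have h2 : MV ((t : ℂ) • R (sqrtV φ)) = sqrtV φ := by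
      rw [← hMVsq, map_smul, map_smul, hXφ, map_smul, smul_smul]
      rw [mul_inv_cancel₀ ht0, one_smul]
    rw [h1, h2, sub_self]
  have hmemK : ∀ u : E, u ∈ LinearMap.ker (K : E →ₗ[ℂ] E) ↔ K u = 0 := fun u => LinearMap.mem_ker
  have hmemL : ∀ u : E, u ∈ LinearMap.ker (L : E →ₗ[ℂ] E) ↔ L u = 0 := fun u => LinearMap.mem_ker
  -- the linear equivalence between the kernels
  let e : (LinearMap.ker (K : E →ₗ[ℂ] E)) ≃ₗ[ℂ] (LinearMap.ker (L : E →ₗ[ℂ] E)) :=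
    { toFun := fun u => ⟨sqrtV u.1, (hmemL _).mpr (hfwd u.1 ((hmemK _).mp u.2))⟩
      map_add' := fun u v => by
        apply Subtype.ext
        simp [map_add]
      map_smul' := fun c u => by
        apply Subtype.ext
        simp
      invFun := fun φ => ⟨(t : ℂ) • R (sqrtV φ.1), (hmemK _).mpr (hbwd φ.1 ((hmemL _).mp φ.2))⟩
      left_inv := fun u => by
        apply Subtype.ext
        show (t : ℂ) • R (sqrtV (sqrtV u.1)) = u.1
        rw [hMVsq, hRMV u.1 ((hmemK _).mp u.2), smul_smul, mul_inv_cancel₀ ht0, one_smul]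
      right_inv := fun φ => by
        apply Subtype.ext
        show sqrtV ((t : ℂ) • R (sqrtV φ.1)) = φ.1
        have hXφ : sqrtV (R (sqrtV φ.1)) = (t : ℂ)⁻¹ • φ.1 := by
          have := hLapp φ.1
          rw [(hmemL _).mp φ.2] at this
          exact (sub_eq_zero.mp this.symm)
        rw [map_smul, hXφ, smul_smul, mul_inv_cancel₀ ht0, one_smul] }
  refine ⟨LinearEquiv.finrank_eq e, ?_⟩
  rw [← Submodule.nontrivial_iff_ne_bot, ← Submodule.nontrivial_iff_ne_bot]
  constructor
  · intro h; exact Equiv.nontrivial e.symm.toEquiv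
  · intro h; exact Equiv.nontrivial e.toEquiv


end
end

section
/- Let T and T' be Hermitian n×n complex matrices and λ ∈ ℝ. Then the counting functions N(T,λ) = card{i : eig_i(T) < λ} and N(T',λ) differ by at most the rank of the perturbation: |N(T,λ) − N(T',λ)| ≤ rank(T − T'). -/
noncomputable section


open Matrix Finset Module Submodule
open scoped InnerProductSpace ComplexConjugate

namespace CFRP

variable {n : ℕ}

lemma rank_neg' (A : Matrix (Fin n) (Fin n) ℂ) : (-A).rank = A.rank := by
  have h : (-A).mulVecLin = -A.mulVecLin := by
    ext x
    simp [Matrix.mulVecLin_apply, Matrix.neg_mulVec]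
  unfold Matrix.rank
  rw [h, LinearMap.range_neg]

lemma rank_toEuclidean (A : Matrix (Fin n) (Fin n) ℂ) :
    A.rank = finrank ℂ (LinearMap.range (Matrix.toEuclideanLin A)) := by
  rw [Matrix.toEuclideanLin_eq_toLin_orthonormal]
  exact A.rank_eq_finrank_range_toLin _ _

lemma quad (b : OrthonormalBasis (Fin n) ℂ (EuclideanSpace ℂ (Fin n)))
    (L : EuclideanSpace ℂ (Fin n) →ₗ[ℂ] EuclideanSpace ℂ (Fin n)) (μ : Fin n → ℝ)
    (hL : ∀ i, L (b i) = (μ i : ℂ) • b i) (x : EuclideanSpace ℂ (Fin n)) :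
    (⟪x, L x⟫_ℂ).re = ∑ i, μ i * ‖b.repr x i‖ ^ 2 := by
  have hx : L x = ∑ i, ((μ i : ℂ) * b.repr x i) • b i := by
    conv_lhs => rw [← b.sum_repr x, map_sum]
    refine Finset.sum_congr rfl fun i _ => ?_
    rw [LinearMap.map_smul, hL, smul_smul, mul_comm]
  rw [hx, inner_sum, Complex.re_sum]
  refine Finset.sum_congr rfl fun i _ => ?_
  have h1 : ⟪x, b i⟫_ℂ = conj (b.repr x i) := by
    rw [← inner_conj_symm, b.repr_apply_apply]
  rw [inner_smul_right, h1, mul_assoc, Complex.mul_conj]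
  simp [Complex.normSq_eq_norm_sq, ← Complex.ofReal_pow]

lemma mem_span_iff (b : OrthonormalBasis (Fin n) ℂ (EuclideanSpace ℂ (Fin n)))
    (s : Finset (Fin n)) (x : EuclideanSpace ℂ (Fin n)) :
    x ∈ span ℂ (⇑b '' ↑s) ↔ ∀ i ∉ s, b.repr x i = 0 := by
  have hcoe : ⇑b '' ↑s = ⇑b.toBasis '' ↑s := by rw [b.coe_toBasis]
  rw [hcoe, Basis.mem_span_image]
  constructor
  · intro h i hi
    rw [← b.coe_toBasis_repr_apply]
    by_contra hne
    exact hi (h (Finsupp.mem_support_iff.2 hne))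
  · intro h i hi
    simp only [Finset.mem_coe]
    by_contra hns
    exact Finsupp.mem_support_iff.1 hi (by rw [b.coe_toBasis_repr_apply]; exact h i hns)

lemma binj (b : OrthonormalBasis (Fin n) ℂ (EuclideanSpace ℂ (Fin n))) :
    Function.Injective ⇑b := by
  rw [← b.coe_toBasis]; exact b.toBasis.injective

lemma finrank_span_basis (b : OrthonormalBasis (Fin n) ℂ (EuclideanSpace ℂ (Fin n)))
    (s : Finset (Fin n)) : finrank ℂ (span ℂ (⇑b '' ↑s)) = s.card := by
  classical
  have hli : LinearIndependent ℂ ((↑) : (⇑b '' ↑s) → EuclideanSpace ℂ (Fin n)) :=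
    (LinearIndepOn.id_image (s := ((↑s : Set (Fin n))))
      (b.orthonormal.linearIndependent.comp _ Subtype.val_injective)).linearIndependent
  haveI : Fintype ↑(⇑b '' ↑s) := (s.finite_toSet.image _).fintype
  rw [finrank_span_set_eq_card hli, Set.toFinset_image, Finset.toFinset_coe]
  exact Finset.card_image_of_injective _ (binj b)

end CFRP

namespace CFRP

lemma toEuclideanLin_eigen {T : Matrix (Fin n) (Fin n) ℂ} (hT : T.IsHermitian) (i : Fin n) :
    Matrix.toEuclideanLin T (hT.eigenvectorBasis i) =
      (hT.eigenvalues i : ℂ) • hT.eigenvectorBasis i := by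
  have h := hT.mulVec_eigenvectorBasis i
  ext j
  simpa [Matrix.toEuclideanLin_apply] using congrFun h j

set_option maxHeartbeats 1000000 in
lemma count_le (T T' : Matrix (Fin n) (Fin n) ℂ) (hT : T.IsHermitian) (hT' : T'.IsHermitian)
    (lam : ℝ) :
    Nat.card {i // hT.eigenvalues i < lam} ≤
      Nat.card {i // hT'.eigenvalues i < lam} + (T - T').rank := by
  classical
  by_contra hcon
  push_neg at hcon
  rw [Nat.card_eq_fintype_card, Nat.card_eq_fintype_card, Fintype.card_subtype,
    Fintype.card_subtype] at hcon
  set b := hT.eigenvectorBasis with hb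
  set b' := hT'.eigenvectorBasis with hb'
  set s : Finset (Fin n) := Finset.univ.filter (fun i => hT.eigenvalues i < lam) with hs
  set s' : Finset (Fin n) := Finset.univ.filter (fun i => hT'.eigenvalues i < lam) with hs'
  set r := (T - T').rank with hr
  set E₁ : Submodule ℂ (EuclideanSpace ℂ (Fin n)) := span ℂ (⇑b '' ↑s) with hE₁
  set F₁ : Submodule ℂ (EuclideanSpace ℂ (Fin n)) := span ℂ (⇑b' '' ↑s'ᶜ) with hF₁
  set K : Submodule ℂ (EuclideanSpace ℂ (Fin n)) :=
    LinearMap.ker (Matrix.toEuclideanLin (T - T')) with hK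
  have hdimE : finrank ℂ E₁ = s.card := finrank_span_basis b s
  have hdimF : finrank ℂ F₁ = n - s'.card := by
    rw [finrank_span_basis b' s'ᶜ, Finset.card_compl, Fintype.card_fin]
  have hscard : s'.card ≤ n := by simpa using s'.card_le_univ
  have hranknul := LinearMap.finrank_range_add_finrank_ker (Matrix.toEuclideanLin (T - T'))
  rw [finrank_euclideanSpace_fin, ← rank_toEuclidean] at hranknul
  have hdimK : finrank ℂ K = n - r := by rw [hK, hr]; omega
  have hrn : r ≤ n := by rw [hr]; omega
  have hinf : ∀ p q : Submodule ℂ (EuclideanSpace ℂ (Fin n)),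
      finrank ℂ p + finrank ℂ q ≤ n + finrank ℂ (p ⊓ q : Submodule ℂ _) := by
    intro p q
    have h1 := Submodule.finrank_sup_add_finrank_inf_eq p q
    have h2 : finrank ℂ (p ⊔ q : Submodule ℂ _) ≤ n := by
      simpa [finrank_euclideanSpace_fin] using Submodule.finrank_le (p ⊔ q)
    omega
  have hI1 := hinf E₁ K
  have hI2 := hinf (E₁ ⊓ K) F₁
  have hpos : 0 < finrank ℂ (E₁ ⊓ K ⊓ F₁ : Submodule ℂ (EuclideanSpace ℂ (Fin n))) := by
    omega
  obtain ⟨⟨x, hxmem⟩, hxne⟩ := Module.finrank_pos_iff_exists_ne_zero.mp hpos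
  have hx0 : x ≠ 0 := fun h => hxne (by simp [h])
  obtain ⟨⟨hxE, hxK⟩, hxF⟩ : (x ∈ E₁ ∧ x ∈ K) ∧ x ∈ F₁ := hxmem
  -- equal action
  have hTx : Matrix.toEuclideanLin T x = Matrix.toEuclideanLin T' x := by
    have : Matrix.toEuclideanLin (T - T') x = 0 := hxK
    rw [map_sub] at this
    have := sub_eq_zero.mp (by simpa using this)
    exact this
  -- quadratic forms
  have hq : (⟪x, Matrix.toEuclideanLin T x⟫_ℂ).re = ∑ i, hT.eigenvalues i * ‖b.repr x i‖ ^ 2 :=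
    quad b _ _ (fun i => toEuclideanLin_eigen hT i) x
  have hq' : (⟪x, Matrix.toEuclideanLin T' x⟫_ℂ).re = ∑ i, hT'.eigenvalues i * ‖b'.repr x i‖ ^ 2 :=
    quad b' _ _ (fun i => toEuclideanLin_eigen hT' i) x
  have hn1 : (⟪x, x⟫_ℂ).re = ∑ i, ‖b.repr x i‖ ^ 2 := by
    simpa using quad b LinearMap.id (fun _ => 1) (fun i => by simp) x
  have hn2 : (⟪x, x⟫_ℂ).re = ∑ i, ‖b'.repr x i‖ ^ 2 := by
    simpa using quad b' LinearMap.id (fun _ => 1) (fun i => by simp) x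
  -- supports
  have hsupp : ∀ i ∉ s, b.repr x i = 0 := (mem_span_iff b s x).mp hxE
  have hsupp' : ∀ i ∈ s', b'.repr x i = 0 := by
    have := (mem_span_iff b' s'ᶜ x).mp hxF
    intro i hi
    exact this i (by simpa using hi)
  -- strict upper bound
  have hlt : ∑ i, hT.eigenvalues i * ‖b.repr x i‖ ^ 2 < lam * ∑ i, ‖b.repr x i‖ ^ 2 := by
    rw [Finset.mul_sum]
    obtain ⟨i₀, hi₀⟩ : ∃ i, b.repr x i ≠ 0 := by
      by_contra h
      push_neg at h
      exact hx0 (by rw [← b.sum_repr x]; simp [h])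
    refine Finset.sum_lt_sum (fun i _ => ?_) ⟨i₀, Finset.mem_univ i₀, ?_⟩
    · by_cases hc : b.repr x i = 0
      · simp [hc]
      · have hi : i ∈ s := by by_contra h; exact hc (hsupp i h)
        have : hT.eigenvalues i < lam := by simpa [hs] using hi
        have hp : (0:ℝ) < ‖b.repr x i‖ ^ 2 := pow_pos (norm_pos_iff.mpr hc) 2
        nlinarith
    · have hi : i₀ ∈ s := by by_contra h; exact hi₀ (hsupp i₀ h)
      have : hT.eigenvalues i₀ < lam := by simpa [hs] using hi
      have hp : (0:ℝ) < ‖b.repr x i₀‖ ^ 2 := pow_pos (norm_pos_iff.mpr hi₀) 2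
      nlinarith
  -- lower bound
  have hge : lam * ∑ i, ‖b'.repr x i‖ ^ 2 ≤ ∑ i, hT'.eigenvalues i * ‖b'.repr x i‖ ^ 2 := by
    rw [Finset.mul_sum]
    refine Finset.sum_le_sum fun i _ => ?_
    by_cases hc : b'.repr x i = 0
    · simp [hc]
    · have hi : i ∉ s' := fun h => hc (hsupp' i h)
      have : lam ≤ hT'.eigenvalues i := by
        by_contra h
        exact hi (by simp [hs', lt_of_not_ge h])
      have hp : (0:ℝ) ≤ ‖b'.repr x i‖ ^ 2 := by positivity
      nlinarith
  rw [← hq] at hlt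
  rw [← hq'] at hge
  rw [hTx] at hlt
  rw [← hn1] at hlt
  rw [← hn2] at hge
  linarith

end CFRP

/-- Let `T` and `T'` be Hermitian `n×n` complex matrices and `λ ∈ ℝ`. Then the
counting functions `N(T,λ) = card {i : eig_i(T) < λ}` and `N(T',λ)` differ by at most the rank of
the perturbation: `|N(T,λ) − N(T',λ)| ≤ rank (T − T')`. -/
theorem counting_function_rank_perturbation {n : ℕ}
    (T T' : Matrix (Fin n) (Fin n) ℂ) (hT : T.IsHermitian) (hT' : T'.IsHermitian) (lam : ℝ) :
    ((Nat.card {i // hT.eigenvalues i < lam} : ℤ) -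
        (Nat.card {i // hT'.eigenvalues i < lam} : ℤ)).natAbs ≤ (T - T').rank := by

  have h1 := CFRP.count_le T T' hT hT' lam
  have h2 := CFRP.count_le T' T hT' hT lam
  have hr : (T' - T).rank = (T - T').rank := by
    rw [show T' - T = -(T - T') from (neg_sub T T').symm, CFRP.rank_neg']
  omega

end
end

section
/- Let A and B be bounded self-adjoint operators on a complex Hilbert space such that σ(A) ∩ (a,b) = ∅ and B − A has finite rank r. Then the total multiplicity of the eigenvalues of B lying in (a,b) is at most r: ∑_{μ ∈ (a,b)} dim ker(B − μI) ≤ r. -/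
noncomputable section

section Aux

variable {H : Type*} [NormedAddCommGroup H] [InnerProductSpace ℂ H] [CompleteSpace H]

local notation "⟪" x ", " y "⟫" => @inner ℂ _ _ x y

/-- Eigenvectors of a self-adjoint operator for distinct real eigenvalues are orthogonal. -/
lemma aux_orth (B : H →L[ℂ] H) (hB : IsSelfAdjoint B) {μ ν : ℝ} (hμν : μ ≠ ν)
    {u v : H} (hu : B u = (μ : ℂ) • u) (hv : B v = (ν : ℂ) • v) : ⟪u, v⟫ = 0 := by
  have h : ⟪B u, v⟫ = ⟪u, B v⟫ := hB.isSymmetric u v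
  rw [hu, hv, inner_smul_left, inner_smul_right, Complex.conj_ofReal] at h
  have hμν' : (μ : ℂ) ≠ (ν : ℂ) := by exact_mod_cast hμν
  have h2 : ((μ : ℂ) - (ν : ℂ)) * ⟪u, v⟫ = 0 := by rw [sub_mul, h, sub_self]
  rcases mul_eq_zero.mp h2 with h' | h'
  · exact absurd (sub_eq_zero.mp h') hμν'
  · exact h'

/-- Pythagoras for finitely many pairwise-orthogonal vectors. -/
lemma aux_norm_sq_sum {ι : Type*} [Fintype ι] (v : ι → H)
    (h : ∀ i j, i ≠ j → ⟪v i, v j⟫ = 0) :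
    ‖∑ i, v i‖ ^ 2 = ∑ i, ‖v i‖ ^ 2 := by
  have h2 : ⟪∑ i, v i, ∑ j, v j⟫ = ∑ i, ⟪v i, v i⟫ := by
    rw [sum_inner]
    refine Finset.sum_congr rfl fun i _ => ?_
    rw [inner_sum]
    exact Finset.sum_eq_single i (fun j _ hj => h i j hj.symm)
      (fun hi => absurd (Finset.mem_univ i) hi)
  calc ‖∑ i, v i‖ ^ 2 = RCLike.re ⟪∑ i, v i, ∑ j, v j⟫ := (inner_self_eq_norm_sq _).symm
    _ = ∑ i, RCLike.re ⟪v i, v i⟫ := by rw [h2, map_sum]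
    _ = ∑ i, ‖v i‖ ^ 2 := Finset.sum_congr rfl fun i _ => inner_self_eq_norm_sq (v i)

/-- Spectral gap lower bound: if the real spectrum of a self-adjoint operator stays at
distance at least `d` from `c`, then `‖(A - c)x‖² ≥ d²‖x‖²`. -/
lemma aux_gap_bound (A : H →L[ℂ] H) (hA : IsSelfAdjoint A) (c d : ℝ)
    (h : ∀ t ∈ spectrum ℝ A, d ^ 2 ≤ (t - c) ^ 2) (x : H) :
    d ^ 2 * ‖x‖ ^ 2 ≤ ‖(A - (c : ℂ) • (1 : H →L[ℂ] H)) x‖ ^ 2 := by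
  have halg : ∀ r : ℝ, algebraMap ℝ (H →L[ℂ] H) r = ((r : ℂ)) • (1 : H →L[ℂ] H) := by
    intro r
    rw [IsScalarTower.algebraMap_apply ℝ ℂ (H →L[ℂ] H), Algebra.algebraMap_eq_smul_one,
      Complex.coe_algebraMap]
  have hT : IsSelfAdjoint (A - (c : ℂ) • (1 : H →L[ℂ] H)) := by
    have hc' : IsSelfAdjoint ((c : ℂ)) := by
      rw [isSelfAdjoint_iff, Complex.star_def]; exact Complex.conj_ofReal c
    exact hA.sub (hc'.smul (IsSelfAdjoint.one _))
  have hcfc : cfc (fun t : ℝ => (t - c) ^ 2 - d ^ 2) A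
      = (A - (c : ℂ) • (1 : H →L[ℂ] H)) ^ 2 - algebraMap ℝ (H →L[ℂ] H) (d ^ 2) := by
    rw [cfc_sub (fun t : ℝ => (t - c) ^ 2) (fun _ => d ^ 2) A,
      cfc_pow (fun t : ℝ => t - c) 2 A,
      cfc_sub (fun t : ℝ => t) (fun _ => c) A, cfc_id' ℝ A, cfc_const c A, cfc_const (d ^ 2) A,
      halg c]
  have h0 : (0 : H →L[ℂ] H)
      ≤ (A - (c : ℂ) • (1 : H →L[ℂ] H)) ^ 2 - algebraMap ℝ (H →L[ℂ] H) (d ^ 2) := by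
    rw [← hcfc]
    exact cfc_nonneg fun t ht => sub_nonneg.mpr (h t ht)
  have hpos := (ContinuousLinearMap.nonneg_iff_isPositive _).mp h0
  have hineq := hpos.inner_nonneg_left x
  set T : H →L[ℂ] H := A - (c : ℂ) • (1 : H →L[ℂ] H) with hTdef
  have happ : (T ^ 2 - algebraMap ℝ (H →L[ℂ] H) (d ^ 2)) x
      = T (T x) - ((d ^ 2 : ℝ) : ℂ) • x := by
    rw [ContinuousLinearMap.sub_apply, pow_two, ContinuousLinearMap.mul_apply, halg (d ^ 2),
      ContinuousLinearMap.smul_apply, ContinuousLinearMap.one_apply]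
  rw [happ, inner_sub_left] at hineq
  replace hineq : 0 ≤ RCLike.re (⟪T (T x), x⟫ - ⟪((d ^ 2 : ℝ) : ℂ) • x, x⟫) :=
    (RCLike.nonneg_iff.mp hineq).1
  rw [map_sub] at hineq
  have h1 : RCLike.re ⟪T (T x), x⟫ = ‖T x‖ ^ 2 := by
    have hsym : ⟪T (T x), x⟫ = ⟪T x, T x⟫ := hT.isSymmetric (T x) x
    rw [hsym]
    exact inner_self_eq_norm_sq (T x)
  have h2 : RCLike.re ⟪((d ^ 2 : ℝ) : ℂ) • x, x⟫ = d ^ 2 * ‖x‖ ^ 2 := by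
    rw [inner_smul_left, Complex.conj_ofReal, RCLike.re_to_complex, Complex.mul_re,
      Complex.ofReal_re, Complex.ofReal_im]
    have him : (⟪x, x⟫ : ℂ).im = 0 := by
      rw [← RCLike.im_to_complex]; exact inner_self_im x
    have hrey : (⟪x, x⟫ : ℂ).re = ‖x‖ ^ 2 := by
      rw [← RCLike.re_to_complex]; exact inner_self_eq_norm_sq x
    rw [him, hrey]; ring
  rw [h1, h2] at hineq
  linarith

end Aux

set_option maxHeartbeats 1000000 in
/-- Let `A` and `B` be bounded self-adjoint operators on a complex Hilbert
space such that `σ(A) ∩ (a,b) = ∅` and `B − A` has finite rank `r`.  Then the total multiplicity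
of the eigenvalues of `B` lying in `(a,b)` is at most `r`:
`∑_{μ ∈ (a,b)} dim ker (B − μ I) ≤ r` (stated for any finite collection of points of `(a,b)`). -/
theorem eigenvalues_in_gap_of_finite_rank_perturbation
    {H : Type*} [NormedAddCommGroup H] [InnerProductSpace ℂ H] [CompleteSpace H]
    (A B : H →L[ℂ] H) (hA : IsSelfAdjoint A) (hB : IsSelfAdjoint B)
    (a b : ℝ) (hgap : ∀ μ : ℝ, μ ∈ Set.Ioo a b → (μ : ℂ) ∉ spectrum ℂ A)
    (r : ℕ) (hrank : Module.rank ℂ (LinearMap.range ((B - A : H →L[ℂ] H) : H →ₗ[ℂ] H)) = (r : Cardinal)) :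
    ∀ s : Finset ℝ, (∀ μ ∈ s, μ ∈ Set.Ioo a b) →
      ∑ μ ∈ s, Module.finrank ℂ (LinearMap.ker ((B - (μ : ℂ) • (1 : H →L[ℂ] H) : H →L[ℂ] H) : H →ₗ[ℂ] H)) ≤ r := by
  intro s hs
  rcases s.eq_empty_or_nonempty with rfl | ⟨μ0, hμ0⟩
  · simp
  have hab : a < b := lt_trans (hs μ0 hμ0).1 (hs μ0 hμ0).2
  set c : ℝ := (a + b) / 2 with hc
  set d : ℝ := (b - a) / 2 with hd
  -- spectral gap bound hypothesis
  have hsp : ∀ t ∈ spectrum ℝ A, d ^ 2 ≤ (t - c) ^ 2 := by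
    intro t ht
    have htC : (t : ℂ) ∈ spectrum ℂ A := by
      have := spectrum.algebraMap_mem ℂ ht
      rwa [Complex.coe_algebraMap] at this
    have htab : t ∉ Set.Ioo a b := fun hmem => hgap t hmem htC
    rw [Set.mem_Ioo, not_and_or, not_lt, not_lt] at htab
    rw [hd, hc]
    rcases htab with h' | h'
    · nlinarith [mul_nonneg (by linarith : (0:ℝ) ≤ a - t) (by linarith : (0:ℝ) ≤ b - t)]
    · nlinarith [mul_nonneg (by linarith : (0:ℝ) ≤ t - a) (by linarith : (0:ℝ) ≤ t - b)]
  haveI hfin : FiniteDimensional ℂ ↥(LinearMap.range ((B - A : H →L[ℂ] H) : H →ₗ[ℂ] H)) :=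
    Module.finite_of_rank_eq_nat hrank
  have hr : Module.finrank ℂ ↥(LinearMap.range ((B - A : H →L[ℂ] H) : H →ₗ[ℂ] H)) = r := Module.finrank_eq_of_rank_eq hrank
  set K : {μ // μ ∈ s} → Submodule ℂ H :=
    fun μ => LinearMap.ker ((B - ((μ : ℝ) : ℂ) • (1 : H →L[ℂ] H) : H →L[ℂ] H) : H →ₗ[ℂ] H) with hK
  -- the summation linear map
  set Ψ : (∀ μ : {μ // μ ∈ s}, K μ) →ₗ[ℂ] H :=
    { toFun := fun f => ∑ μ, ((f μ : H))
      map_add' := by intro f g; simp [Finset.sum_add_distrib]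
      map_smul' := by intro z f; simp [Finset.smul_sum] } with hΨ
  have hΨapp : ∀ f : (∀ μ : {μ // μ ∈ s}, K μ), Ψ f = ∑ μ, ((f μ : H)) := fun f => rfl
  set Φ : (∀ μ : {μ // μ ∈ s}, K μ) →ₗ[ℂ] ↥(LinearMap.range ((B - A : H →L[ℂ] H) : H →ₗ[ℂ] H)) :=
    ((B - A : H →L[ℂ] H).toLinearMap.comp Ψ).codRestrict (LinearMap.range ((B - A : H →L[ℂ] H) : H →ₗ[ℂ] H))
      (fun f => LinearMap.mem_range.mpr ⟨Ψ f, rfl⟩) with hΦ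
  have hBf : ∀ (f : ∀ μ : {μ // μ ∈ s}, K μ) (μ : {μ // μ ∈ s}),
      B (f μ : H) = ((μ : ℝ) : ℂ) • (f μ : H) := by
    intro f μ
    have hmem : (f μ : H) ∈ LinearMap.ker ((B - ((μ : ℝ) : ℂ) • (1 : H →L[ℂ] H) : H →L[ℂ] H) : H →ₗ[ℂ] H) := (f μ).2
    rw [LinearMap.mem_ker, ContinuousLinearMap.coe_coe] at hmem
    rw [ContinuousLinearMap.sub_apply, ContinuousLinearMap.smul_apply,
      ContinuousLinearMap.one_apply, sub_eq_zero] at hmem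
    exact hmem
  have hlt : ∀ μ : {μ // μ ∈ s}, ((μ : ℝ) - c) ^ 2 < d ^ 2 := by
    intro μ
    have h1 := (hs μ.1 μ.2).1
    have h2 := (hs μ.1 μ.2).2
    rw [hd, hc]
    nlinarith [mul_pos (by linarith : (0:ℝ) < b - (μ : ℝ)) (by linarith : (0:ℝ) < (μ : ℝ) - a)]
  -- injectivity of Φ
  have hker : ∀ f : (∀ μ : {μ // μ ∈ s}, K μ), Φ f = 0 → f = 0 := by
    intro f hf
    have h0 : (B - A) (Ψ f) = 0 := by
      have := congrArg Subtype.val hf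
      simpa [hΦ] using this
    have hAB : A (Ψ f) = B (Ψ f) := by
      have h1 : B (Ψ f) - A (Ψ f) = 0 := by
        simpa [ContinuousLinearMap.sub_apply] using h0
      have := sub_eq_zero.mp h1
      exact this.symm
    have horth : ∀ μ ν : {μ // μ ∈ s}, μ ≠ ν →
        (inner ℂ (f μ : H) (f ν : H) : ℂ) = 0 := by
      intro μ ν hμν
      have hne : (μ : ℝ) ≠ (ν : ℝ) := fun h => hμν (Subtype.ext h)
      exact aux_orth B hB hne (hBf f μ) (hBf f ν)
    have hx2 : ‖Ψ f‖ ^ 2 = ∑ μ, ‖(f μ : H)‖ ^ 2 := by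
      rw [hΨapp f]
      exact aux_norm_sq_sum _ horth
    have hy : (A - (c : ℂ) • (1 : H →L[ℂ] H)) (Ψ f)
        = ∑ μ : {μ // μ ∈ s}, ((((μ : ℝ) - c : ℝ) : ℂ)) • (f μ : H) := by
      rw [ContinuousLinearMap.sub_apply, hAB, ContinuousLinearMap.smul_apply,
        ContinuousLinearMap.one_apply, hΨapp f, map_sum, Finset.smul_sum,
        ← Finset.sum_sub_distrib]
      refine Finset.sum_congr rfl fun μ _ => ?_
      rw [hBf f μ, ← sub_smul]
      norm_cast
    have hy2 : ‖(A - (c : ℂ) • (1 : H →L[ℂ] H)) (Ψ f)‖ ^ 2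
        = ∑ μ : {μ // μ ∈ s}, ((μ : ℝ) - c) ^ 2 * ‖(f μ : H)‖ ^ 2 := by
      rw [hy, aux_norm_sq_sum _ ?_]
      · refine Finset.sum_congr rfl fun μ _ => ?_
        rw [norm_smul, mul_pow]
        congr 1
        rw [Complex.norm_real, Real.norm_eq_abs, sq_abs]
      · intro i j hij
        rw [inner_smul_left, inner_smul_right, horth i j hij, mul_zero, mul_zero]
    have hkey := aux_gap_bound A hA c d hsp (Ψ f)
    rw [hy2, hx2] at hkey
    have hterm : ∀ μ : {μ // μ ∈ s}, 0 ≤ (d ^ 2 - ((μ : ℝ) - c) ^ 2) * ‖(f μ : H)‖ ^ 2 :=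
      fun μ => mul_nonneg (by linarith [hlt μ]) (sq_nonneg _)
    have hsumle : ∑ μ : {μ // μ ∈ s}, (d ^ 2 - ((μ : ℝ) - c) ^ 2) * ‖(f μ : H)‖ ^ 2 ≤ 0 := by
      have hexp : ∑ μ : {μ // μ ∈ s}, (d ^ 2 - ((μ : ℝ) - c) ^ 2) * ‖(f μ : H)‖ ^ 2
          = d ^ 2 * ∑ μ : {μ // μ ∈ s}, ‖(f μ : H)‖ ^ 2
            - ∑ μ : {μ // μ ∈ s}, ((μ : ℝ) - c) ^ 2 * ‖(f μ : H)‖ ^ 2 := by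
        rw [Finset.mul_sum, ← Finset.sum_sub_distrib]
        exact Finset.sum_congr rfl fun μ _ => by ring
      rw [hexp]
      linarith
    have hsum0 : ∑ μ : {μ // μ ∈ s}, (d ^ 2 - ((μ : ℝ) - c) ^ 2) * ‖(f μ : H)‖ ^ 2 = 0 :=
      le_antisymm hsumle (Finset.sum_nonneg fun μ _ => hterm μ)
    have hzero := (Finset.sum_eq_zero_iff_of_nonneg fun μ _ => hterm μ).mp hsum0
    funext μ
    have h0μ := hzero μ (Finset.mem_univ μ)
    rcases mul_eq_zero.mp h0μ with h' | h'
    · exact absurd h' (by have := hlt μ; intro h''; linarith)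
    · have hnorm : ‖(f μ : H)‖ = 0 := (pow_eq_zero_iff two_ne_zero).mp h'
      have : (f μ : H) = 0 := norm_eq_zero.mp hnorm
      simpa [Submodule.coe_eq_zero] using this
  have hinj : Function.Injective Φ := by
    rw [← LinearMap.ker_eq_bot]
    exact LinearMap.ker_eq_bot'.mpr hker
  haveI hKfin : ∀ μ : {μ // μ ∈ s}, FiniteDimensional ℂ (K μ) := by
    intro μ
    have hsingle : Function.Injective (LinearMap.single ℂ (fun ν : {μ // μ ∈ s} => K ν) μ) :=
      LinearMap.ker_eq_bot.mp (LinearMap.ker_single ℂ _ μ)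
    exact FiniteDimensional.of_injective
      (Φ.comp (LinearMap.single ℂ (fun ν : {μ // μ ∈ s} => K ν) μ)) (hinj.comp hsingle)
  have hpi : Module.finrank ℂ (∀ μ : {μ // μ ∈ s}, K μ)
      = ∑ μ : {μ // μ ∈ s}, Module.finrank ℂ (K μ) := Module.finrank_pi_fintype ℂ
  have hle := LinearMap.finrank_le_finrank_of_injective hinj
  rw [hpi, hr] at hle
  calc ∑ μ ∈ s, Module.finrank ℂ (LinearMap.ker ((B - (μ : ℂ) • (1 : H →L[ℂ] H) : H →L[ℂ] H) : H →ₗ[ℂ] H))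
      = ∑ μ : {μ // μ ∈ s}, Module.finrank ℂ (K μ) :=
        (Finset.sum_coe_sort s
          (fun μ => Module.finrank ℂ (LinearMap.ker ((B - (μ : ℂ) • (1 : H →L[ℂ] H) : H →L[ℂ] H) : H →ₗ[ℂ] H)))).symm
    _ ≤ r := hle

end
end

section
/- Let S and T be Hermitian n×n complex matrices with S ≤ T in the Loewner order (i.e. T − S is positive semidefinite). Then for every λ ∈ ℝ, the number of eigenvalues of T strictly below λ is at most the number of eigenvalues of S strictly below λ: N(T,λ) ≤ N(S,λ). -/
open scoped ComplexOrder

noncomputable section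

open Matrix Module

lemma quad_eq {n : ℕ} {A : Matrix (Fin n) (Fin n) ℂ} (hA : A.IsHermitian)
    (x : EuclideanSpace ℂ (Fin n)) :
    (inner ℂ x (Matrix.toEuclideanLin A x) : ℂ).re
      = ∑ i, hA.eigenvalues i * ‖hA.eigenvectorBasis.repr x i‖ ^ 2 := by
  set b := hA.eigenvectorBasis with hb
  have hbi : ∀ i, Matrix.toEuclideanLin A (b i) = (hA.eigenvalues i : ℂ) • b i := by
    intro i
    apply (WithLp.equiv 2 (Fin n → ℂ)).injective
    simpa [Matrix.toEuclideanLin_apply] using hA.mulVec_eigenvectorBasis i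
  have hx : Matrix.toEuclideanLin A x = ∑ i, (b.repr x i * hA.eigenvalues i) • b i := by
    conv_lhs => rw [← b.sum_repr x]
    rw [map_sum]
    refine Finset.sum_congr rfl fun i _ => ?_
    rw [LinearMap.map_smul, hbi i, smul_smul, mul_comm]
  rw [hx, inner_sum, Complex.re_sum]
  refine Finset.sum_congr rfl fun i _ => ?_
  rw [inner_smul_right, ← inner_conj_symm, b.repr_apply_apply]
  rw [mul_right_comm, RCLike.mul_conj, mul_comm]
  norm_cast
  simp only [Complex.mul_re, Complex.ofReal_re, Complex.ofReal_im, mul_zero, zero_mul, sub_zero]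
  rfl

lemma repr_zero_of_span {n : ℕ} (b : OrthonormalBasis (Fin n) ℂ (EuclideanSpace ℂ (Fin n)))
    (P : Set (Fin n)) {x : EuclideanSpace ℂ (Fin n)}
    (hx : x ∈ Submodule.span ℂ (b '' P)) {j : Fin n} (hj : j ∉ P) :
    b.repr x j = 0 := by
  induction hx using Submodule.span_induction with
  | mem y hy =>
      obtain ⟨i, hi, rfl⟩ := hy
      rw [b.repr_self]
      have : i ≠ j := fun h => hj (h ▸ hi)
      simp [EuclideanSpace.single_apply, this, this.symm]
  | zero => simp
  | add y z _ _ hy hz => simp [map_add, hy, hz]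
  | smul c y _ hy => simp [_root_.map_smul, hy]

lemma finrank_span_basis_image {n : ℕ} (b : OrthonormalBasis (Fin n) ℂ (EuclideanSpace ℂ (Fin n)))
    (P : Set (Fin n)) :
    Module.finrank ℂ (Submodule.span ℂ (b '' P)) = Nat.card P := by
  classical
  have h1 : (b '' P) = Set.range (fun i : P => b i) := Set.image_eq_range _ _
  have h2 : LinearIndependent ℂ (fun i : P => b i) :=
    b.orthonormal.linearIndependent.comp Subtype.val Subtype.val_injective
  rw [h1, finrank_span_eq_card h2, Nat.card_eq_fintype_card]

/-- Let `S` and `T` be Hermitian `n×n` complex matrices with `S ≤ T` in the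
Loewner order (i.e. `T − S` is positive semidefinite). Then for every `λ ∈ ℝ`, the number of
eigenvalues of `T` strictly below `λ` is at most the number of eigenvalues of `S` strictly
below `λ`: `N(T,λ) ≤ N(S,λ)`. -/
theorem counting_function_loewner_monotone {n : ℕ}
    (S T : Matrix (Fin n) (Fin n) ℂ) (hS : S.IsHermitian) (hT : T.IsHermitian)
    (hST : (T - S).PosSemidef) (lam : ℝ) :
    Nat.card {i // hT.eigenvalues i < lam} ≤ Nat.card {i // hS.eigenvalues i < lam} := by
  classical
  by_contra hcon
  push_neg at hcon
  set PT : Set (Fin n) := {i | hT.eigenvalues i < lam} with hPT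
  set PS : Set (Fin n) := {i | ¬ hS.eigenvalues i < lam} with hPS
  set bT := hT.eigenvectorBasis with hbT
  set bS := hS.eigenvectorBasis with hbS
  set W1 := Submodule.span ℂ (bT '' PT) with hW1
  set W2 := Submodule.span ℂ (bS '' PS) with hW2
  have hd1 : Module.finrank ℂ W1 = Nat.card {i // hT.eigenvalues i < lam} :=
    finrank_span_basis_image bT PT
  have hd2 : Module.finrank ℂ W2 = Nat.card {i // ¬ hS.eigenvalues i < lam} :=
    finrank_span_basis_image bS PS
  -- cardinality arithmetic
  have hcompl : Fintype.card {i // ¬ hS.eigenvalues i < lam}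
      = Fintype.card (Fin n) - Fintype.card {i // hS.eigenvalues i < lam} :=
    Fintype.card_subtype_compl _
  have hle' : Fintype.card {i // hS.eigenvalues i < lam} ≤ Fintype.card (Fin n) :=
    Fintype.card_subtype_le _
  have hdim : n < Module.finrank ℂ W1 + Module.finrank ℂ W2 := by
    rw [hd1, hd2]
    simp only [Nat.card_eq_fintype_card] at hcon ⊢
    rw [hcompl]
    simp only [Fintype.card_fin] at *
    omega
  -- intersection is nontrivial
  have hfr : Module.finrank ℂ (EuclideanSpace ℂ (Fin n)) = n := finrank_euclideanSpace_fin
  have hsup : Module.finrank ℂ ↥(W1 ⊔ W2) ≤ n :=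
    by simpa [hfr] using Submodule.finrank_le (W1 ⊔ W2)
  have heq := Submodule.finrank_sup_add_finrank_inf_eq W1 W2
  have hne : W1 ⊓ W2 ≠ ⊥ := by
    intro h
    rw [h, finrank_bot] at heq
    omega
  obtain ⟨x, hx, hx0⟩ := (Submodule.ne_bot_iff _).mp hne
  have hxT : x ∈ W1 := (Submodule.mem_inf.mp hx).1
  have hxS : x ∈ W2 := (Submodule.mem_inf.mp hx).2
  -- norms
  have hnorm : ∀ b : OrthonormalBasis (Fin n) ℂ (EuclideanSpace ℂ (Fin n)),
      ∑ i, ‖b.repr x i‖ ^ 2 = ‖x‖ ^ 2 := by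
    intro b
    have h1 : ‖b.repr x‖ = ‖x‖ := b.repr.norm_map x
    rw [← h1, EuclideanSpace.norm_eq, Real.sq_sqrt]
    positivity
  -- a nonzero coordinate for T
  have hex : ∃ i, bT.repr x i ≠ 0 := by
    by_contra hall
    push_neg at hall
    apply hx0
    have : bT.repr x = 0 := by
      ext i; simpa using hall i
    exact bT.repr.map_eq_zero_iff.mp this
  obtain ⟨i0, hi0⟩ := hex
  have hi0T : i0 ∈ PT := by
    by_contra h
    exact hi0 (repr_zero_of_span bT PT hxT h)
  -- sum comparisons
  have hTlt : ∑ i, hT.eigenvalues i * ‖bT.repr x i‖ ^ 2 < ∑ i, lam * ‖bT.repr x i‖ ^ 2 := by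
    refine Finset.sum_lt_sum (fun i _ => ?_) ⟨i0, Finset.mem_univ _, ?_⟩
    · by_cases h : bT.repr x i = 0
      · simp [h]
      · have hiP : i ∈ PT := by
          by_contra hc; exact h (repr_zero_of_span bT PT hxT hc)
        exact mul_le_mul_of_nonneg_right (le_of_lt hiP) (by positivity)
    · exact mul_lt_mul_of_pos_right hi0T (pow_pos (norm_pos_iff.mpr hi0) 2)
  have hSge : ∑ i, lam * ‖bS.repr x i‖ ^ 2 ≤ ∑ i, hS.eigenvalues i * ‖bS.repr x i‖ ^ 2 := by
    refine Finset.sum_le_sum fun i _ => ?_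
    by_cases h : bS.repr x i = 0
    · simp [h]
    · have hiP : i ∈ PS := by
        by_contra hc; exact h (repr_zero_of_span bS PS hxS hc)
      have : lam ≤ hS.eigenvalues i := le_of_not_gt hiP
      exact mul_le_mul_of_nonneg_right this (by positivity)
  have hTsum : ∑ i, lam * ‖bT.repr x i‖ ^ 2 = lam * ‖x‖ ^ 2 := by
    rw [← Finset.mul_sum, hnorm bT]
  have hSsum : ∑ i, lam * ‖bS.repr x i‖ ^ 2 = lam * ‖x‖ ^ 2 := by
    rw [← Finset.mul_sum, hnorm bS]
  -- positive semidefiniteness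
  have hq := hST.dotProduct_mulVec_nonneg (WithLp.equiv 2 (Fin n → ℂ) x)
  have hrel : ∀ A : Matrix (Fin n) (Fin n) ℂ, (inner ℂ x (Matrix.toEuclideanLin A x) : ℂ)
      = dotProduct (star (WithLp.equiv 2 (Fin n → ℂ) x))
        (A *ᵥ (WithLp.equiv 2 (Fin n → ℂ) x)) := fun A => by
        rw [EuclideanSpace.inner_eq_star_dotProduct, dotProduct_comm]; rfl
  have hre : (inner ℂ x (Matrix.toEuclideanLin S x) : ℂ).re
      ≤ (inner ℂ x (Matrix.toEuclideanLin T x) : ℂ).re := by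
    rw [Matrix.sub_mulVec, dotProduct_sub] at hq
    have := (Complex.le_def.mp hq).1
    rw [hrel S, hrel T]
    simp only [Complex.zero_re, Complex.sub_re] at this
    linarith
  have hqS := quad_eq hS x
  have hqT := quad_eq hT x
  rw [← hbS] at hqS
  rw [← hbT] at hqT
  linarith [hqS, hqT]

end
end
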